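/- (Bott's formula, dimension part) For 0 ≤ p < m, the dimension of H^0(ℙ^n, Ω^p(m)) equals binomial(m−1, p) · binomial(m+n−p, m), and by Serre duality this also equals h^n(ℙ^n, Ω^{n−p}(−m)). -/

import Mathlib

/-!
STATEMENT 4 (Bott's formula, dimension part): For `0 ≤ p < m`,
`h^0(ℙ^n, Ω^p(m)) = C(m−1, p)·C(m+n−p, m)`, and by Serre duality this also equals
`h^n(ℙ^n, Ω^{n−p}(−m))`.

Formalization: `H^0(ℙ^n, Ω^p(m))` is realized by its standard concrete model
(Euler-contraction kernel of polynomial-coefficient alternating forms, via the Euler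
sequence); for the `h^n` clause — Mathlib has no higher coherent sheaf cohomology —
we quantify over any dimension function `h q p m = h^q(ℙ^n, Ω^p(m))` that agrees with
the concrete model in degree 0 and satisfies Serre duality `h^q(Ω^p(m)) = h^{n−q}(Ω^{n−p}(−m))`.
-/

open MvPolynomial

open MvPolynomial

open MvPolynomial Finset

namespace Bott

/-- Polynomial ring. -/
abbrev S (n : ℕ) := MvPolynomial (Fin (n+1)) ℂ

/-- Big coordinate space: one coefficient for each subset of variables. -/
abbrev Cc (n : ℕ) := Finset (Fin (n+1)) → S n

/-- count of elements of `J` below `i`. -/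
def cnt {n : ℕ} (J : Finset (Fin (n+1))) (i : Fin (n+1)) : ℕ := (J.filter (· < i)).card

noncomputable def sgn {n : ℕ} (J : Finset (Fin (n+1))) (i : Fin (n+1)) : ℂ :=
  (-1) ^ cnt J i

lemma sgn_mul_self {n : ℕ} (J : Finset (Fin (n+1))) (i : Fin (n+1)) :
    sgn J i * sgn J i = 1 := by
  rw [sgn, ← pow_add]
  exact Even.neg_one_pow ⟨cnt J i, rfl⟩

lemma cnt_insert {n : ℕ} {J : Finset (Fin (n+1))} {a : Fin (n+1)} (ha : a ∉ J)
    (b : Fin (n+1)) :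
    cnt (insert a J) b = cnt J b + if a < b then 1 else 0 := by
  unfold cnt
  rw [filter_insert]
  split_ifs with h
  · rw [card_insert_of_notMem (fun hmem => ha (Finset.mem_of_mem_filter a hmem))]
  · rfl

lemma cnt_erase_self {n : ℕ} (K : Finset (Fin (n+1))) (i : Fin (n+1)) :
    cnt (K.erase i) i = cnt K i := by
  unfold cnt
  congr 1
  ext x
  simp only [mem_filter, mem_erase]
  constructor
  · rintro ⟨⟨_, hx⟩, hlt⟩; exact ⟨hx, hlt⟩
  · rintro ⟨hx, hlt⟩; exact ⟨⟨ne_of_lt hlt, hx⟩, hlt⟩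

lemma sgn_insert_self {n : ℕ} {J : Finset (Fin (n+1))} {i : Fin (n+1)} (hi : i ∉ J) :
    sgn (insert i J) i = sgn J i := by
  rw [sgn, sgn, cnt_insert hi, if_neg (lt_irrefl i), add_zero]

lemma sgn_erase_self {n : ℕ} (K : Finset (Fin (n+1))) (i : Fin (n+1)) :
    sgn (K.erase i) i = sgn K i := by rw [sgn, sgn, cnt_erase_self]

/-- The coordinate contraction (Koszul differential). -/
noncomputable def contr (n : ℕ) : Cc n →ₗ[ℂ] Cc n where
  toFun f J := ∑ i ∈ Jᶜ, sgn J i • (X i * f (insert i J))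
  map_add' f g := by
    funext J
    simp only [Pi.add_apply, mul_add, smul_add, sum_add_distrib]
  map_smul' c f := by
    funext J
    simp only [Pi.smul_apply, RingHom.id_apply, smul_sum]
    refine Finset.sum_congr rfl fun i _ => ?_
    rw [mul_smul_comm, smul_comm]

/-- The coordinate wedge-with-derivative operator (Koszul homotopy). -/
noncomputable def wdg (n : ℕ) : Cc n →ₗ[ℂ] Cc n where
  toFun f K := ∑ i ∈ K, sgn K i • pderiv i (f (K.erase i))
  map_add' f g := by
    funext K
    simp only [Pi.add_apply, map_add, smul_add, sum_add_distrib]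
  map_smul' c f := by
    funext K
    simp only [Pi.smul_apply, RingHom.id_apply, smul_sum, Derivation.map_smul, smul_comm c]

lemma contr_apply {n : ℕ} (f : Cc n) (J : Finset (Fin (n+1))) :
    contr n f J = ∑ i ∈ Jᶜ, sgn J i • (X i * f (insert i J)) := rfl

lemma wdg_apply {n : ℕ} (f : Cc n) (K : Finset (Fin (n+1))) :
    wdg n f K = ∑ i ∈ K, sgn K i • pderiv i (f (K.erase i)) := rfl

/-- sign antisymmetry for double insertion -/
lemma sgn_swap {n : ℕ} {J : Finset (Fin (n+1))} {i k : Fin (n+1)} (hi : i ∉ J) (hk : k ∉ J)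
    (hik : i ≠ k) :
    sgn J i * sgn (insert i J) k = -(sgn J k * sgn (insert k J) i) := by
  unfold sgn
  rw [cnt_insert hi k, cnt_insert hk i]
  rcases lt_or_gt_of_ne hik with h | h
  · rw [if_pos h, if_neg (asymm h), pow_add, pow_add, pow_one, pow_zero]
    ring
  · rw [if_neg (asymm h), if_pos h, pow_add, pow_add, pow_one, pow_zero]
    ring

/-- The contraction squares to zero. -/
lemma contr_contr {n : ℕ} (f : Cc n) : contr n (contr n f) = 0 := by
  funext J
  simp only [contr_apply, Pi.zero_apply]
  have hrw : ∀ i ∈ Jᶜ,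
      sgn J i • (X (σ := Fin (n+1)) i * ∑ k ∈ (insert i J)ᶜ, sgn (insert i J) k •
        (X k * f (insert k (insert i J)))) =
      ∑ k ∈ Jᶜ.erase i, (sgn J i * sgn (insert i J) k) •
        (X i * X k * f (insert k (insert i J))) := by
    intro i _
    rw [compl_insert, mul_sum, smul_sum]
    refine Finset.sum_congr rfl fun k _ => ?_
    rw [mul_smul_comm, smul_smul, mul_assoc]
  rw [Finset.sum_congr rfl hrw]
  -- now an antisymmetric double sum
  set F : Fin (n+1) → Fin (n+1) → S n := fun i k =>
    (sgn J i * sgn (insert i J) k) • (X i * X k * f (insert k (insert i J))) with hF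
  have hanti : ∀ i ∈ Jᶜ, ∀ k ∈ Jᶜ.erase i, F i k = - F k i := by
    intro i hi k hk
    rw [mem_erase] at hk
    rw [hF]
    simp only
    rw [show insert k (insert i J) = insert i (insert k J) from Finset.insert_comm k i J,
      show (X i : S n) * X k = X k * X i from mul_comm _ _,
      sgn_swap (mem_compl.mp hi) (mem_compl.mp hk.2) (Ne.symm hk.1), neg_smul]
  have hcomm : ∑ i ∈ Jᶜ, ∑ k ∈ Jᶜ.erase i, F i k = ∑ k ∈ Jᶜ, ∑ i ∈ Jᶜ.erase k, F i k := by
    refine Finset.sum_comm' ?_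
    intro x y
    simp only [mem_erase, mem_compl]
    tauto
  have hzero : (∑ i ∈ Jᶜ, ∑ k ∈ Jᶜ.erase i, F i k) + (∑ i ∈ Jᶜ, ∑ k ∈ Jᶜ.erase i, F i k) = 0 := by
    nth_rewrite 2 [hcomm]
    rw [← Finset.sum_add_distrib]
    refine Finset.sum_eq_zero fun i hi => ?_
    rw [← Finset.sum_add_distrib]
    refine Finset.sum_eq_zero fun k hk => ?_
    rw [hanti i hi k hk]
    ring
  have h2 : (2:ℂ) • ∑ i ∈ Jᶜ, ∑ k ∈ Jᶜ.erase i, F i k = 0 := by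
    rw [two_smul]; exact hzero
  rcases smul_eq_zero.mp h2 with h | h
  · norm_num at h
  · exact h


/-! ### Homogeneity infrastructure -/

lemma isHomog_of_components {n : ℕ} {g : S n} {d0 : ℕ}
    (h : ∀ d : ℕ, d ≠ d0 → homogeneousComponent d g = 0) :
    g ∈ homogeneousSubmodule (Fin (n+1)) ℂ d0 := by
  have hg : g = ∑ i ∈ Finset.range (g.totalDegree + 1), homogeneousComponent i g :=
    (sum_homogeneousComponent g).symm
  rw [hg]
  refine Submodule.sum_mem _ fun i _ => ?_
  by_cases hi : i = d0
  · subst hi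
    exact (mem_homogeneousSubmodule _ _).mpr (homogeneousComponent_isHomogeneous i g)
  · rw [h i hi]; exact Submodule.zero_mem _

lemma components_of_isHomog {n : ℕ} {g : S n} {d0 : ℕ}
    (hg : g ∈ homogeneousSubmodule (Fin (n+1)) ℂ d0) {d : ℕ} (hd : d ≠ d0) :
    homogeneousComponent d g = 0 := by
  rw [homogeneousComponent_of_mem hg, if_neg hd]

lemma eq_zero_of_components {n : ℕ} {g : S n}
    (h : ∀ d : ℕ, homogeneousComponent d g = 0) : g = 0 := by
  have hg : g = ∑ i ∈ Finset.range (g.totalDegree + 1), homogeneousComponent i g :=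
    (sum_homogeneousComponent g).symm
  rw [hg]
  exact Finset.sum_eq_zero fun i _ => h i

lemma degree_add' {σ : Type*} (a b : σ →₀ ℕ) :
    Finsupp.degree (a + b) = Finsupp.degree a + Finsupp.degree b := by
  simp [Finsupp.degree_eq_weight_one, map_add]

lemma degree_single' {σ : Type*} (i : σ) (k : ℕ) :
    Finsupp.degree (Finsupp.single i k) = k := by
  classical
  rcases eq_or_ne k 0 with rfl | hk
  · simp [Finsupp.degree]
  · rw [Finsupp.degree_apply, Finsupp.support_single_ne_zero _ hk, Finset.sum_singleton,
      Finsupp.single_eq_same]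

lemma single_add_sub {σ : Type*} [DecidableEq σ] {d : σ →₀ ℕ} {i : σ} (h : d i ≠ 0) :
    Finsupp.single i 1 + (d - Finsupp.single i 1) = d := by
  ext j
  rcases eq_or_ne j i with rfl | hj
  · simp [Finsupp.single_eq_same]
    omega
  · simp [Finsupp.single_eq_of_ne' (Ne.symm hj)]

lemma pderiv_isHomog {n : ℕ} {g : S n} {t : ℕ}
    (hg : g ∈ homogeneousSubmodule (Fin (n+1)) ℂ t) (i : Fin (n+1)) :
    pderiv i g ∈ homogeneousSubmodule (Fin (n+1)) ℂ (t - 1) := by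
  have hsum : g = ∑ d ∈ g.support, monomial d (coeff d g) :=
    (support_sum_monomial_coeff g).symm
  rw [hsum, map_sum]
  refine Submodule.sum_mem _ fun d hd => ?_
  rw [pderiv_monomial]
  rcases eq_or_ne (d i) 0 with h0 | h0
  · simp [h0]
  · refine (mem_homogeneousSubmodule _ _).mpr (isHomogeneous_monomial _ ?_)
    have hdeg : Finsupp.degree d = t := by
      by_contra hne
      exact (mem_support_iff.mp hd)
        (((mem_homogeneousSubmodule _ _).mp hg).coeff_eq_zero hne)
    have := degree_add' (Finsupp.single i 1) (d - Finsupp.single i 1)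
    rw [single_add_sub h0, degree_single'] at this
    omega

lemma euler_monomial {n : ℕ} (d : Fin (n+1) →₀ ℕ) (c : ℂ) :
    ∑ i : Fin (n+1), (X i : S n) * pderiv i (monomial d c)
      = (((Finsupp.degree d : ℕ) : ℂ)) • monomial d c := by
  have hterm : ∀ i : Fin (n+1), (X i : S n) * pderiv i (monomial d c)
      = ((d i : ℂ)) • monomial d c := by
    intro i
    rw [pderiv_monomial]
    rcases eq_or_ne (d i) 0 with h0 | h0
    · simp [h0]
    · calc (X i : S n) * monomial (d - Finsupp.single i 1) (c * (d i : ℂ))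
          = (X i) ^ 1 * monomial (d - Finsupp.single i 1) (c * (d i : ℂ)) := by rw [pow_one]
        _ = monomial (Finsupp.single i 1 + (d - Finsupp.single i 1)) (c * (d i : ℂ)) :=
            (monomial_single_add).symm
        _ = ((d i : ℂ)) • monomial d c := by
            rw [single_add_sub h0, smul_monomial, smul_eq_mul, mul_comm]
  rw [Finset.sum_congr rfl (fun i _ => hterm i), ← Finset.sum_smul]
  congr 1
  rw [← Nat.cast_sum]
  congr 1
  rw [Finsupp.degree_apply]
  exact (Finset.sum_subset (Finset.subset_univ _)
    (fun x _ hx => Finsupp.notMem_support_iff.mp hx)).symm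

lemma euler {n t : ℕ} {g : S n} (hg : g ∈ homogeneousSubmodule (Fin (n+1)) ℂ t) :
    ∑ i : Fin (n+1), (X i : S n) * pderiv i g = (t : ℂ) • g := by
  have hsum : g = ∑ d ∈ g.support, monomial d (coeff d g) :=
    (support_sum_monomial_coeff g).symm
  calc ∑ i : Fin (n+1), (X i : S n) * pderiv i g
      = ∑ i : Fin (n+1), ∑ d ∈ g.support, (X i : S n) * pderiv i (monomial d (coeff d g)) := by
        refine Finset.sum_congr rfl fun i _ => ?_
        conv_lhs => rw [hsum]
        rw [map_sum, mul_sum]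
    _ = ∑ d ∈ g.support, ∑ i : Fin (n+1), (X i : S n) * pderiv i (monomial d (coeff d g)) :=
        Finset.sum_comm
    _ = ∑ d ∈ g.support, (t : ℂ) • monomial d (coeff d g) := by
        refine Finset.sum_congr rfl fun d hd => ?_
        rw [euler_monomial]
        congr 2
        by_contra hne
        exact (mem_support_iff.mp hd)
          (((mem_homogeneousSubmodule _ _).mp hg).coeff_eq_zero hne)
    _ = (t : ℂ) • g := by rw [← Finset.smul_sum, ← hsum]

/-! ### off-diagonal sign lemma -/

lemma sgn_offdiag {n : ℕ} {J : Finset (Fin (n+1))} {i k : Fin (n+1)}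
    (hi : i ∉ J) (hk : k ∈ J) :
    sgn J i * sgn (insert i J) k = -(sgn J k * sgn (J.erase k) i) := by
  have hik : i ≠ k := fun h => hi (h ▸ hk)
  have hkE : k ∉ J.erase k := notMem_erase k J
  have hJ : insert k (J.erase k) = J := insert_erase hk
  have h1 : cnt J i = cnt (J.erase k) i + if k < i then 1 else 0 := by
    conv_lhs => rw [← hJ]
    rw [cnt_insert hkE i]
  have h2 : cnt (insert i J) k = cnt J k + if i < k then 1 else 0 := cnt_insert hi k
  unfold sgn
  rw [h1, h2]
  rcases lt_or_gt_of_ne hik with h | h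
  · rw [if_pos h, if_neg (asymm h), add_zero, pow_add, pow_one]
    ring
  · rw [if_neg (asymm h), if_pos h, add_zero, pow_add, pow_one]
    ring

/-! ### The homotopy identity -/

lemma homotopy {n t p : ℕ} (f : Cc n) (hsupp : ∀ I, I.card ≠ p → f I = 0)
    (hhom : ∀ I, f I ∈ homogeneousSubmodule (Fin (n+1)) ℂ t) :
    contr n (wdg n f) + wdg n (contr n f) = ((t + p : ℕ) : ℂ) • f := by
  funext J
  simp only [Pi.add_apply, Pi.smul_apply]
  by_cases hJ : J.card = p
  case neg =>
    rw [hsupp J hJ, smul_zero]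
    have hz1 : contr n (wdg n f) J = 0 := by
      rw [contr_apply]
      refine Finset.sum_eq_zero fun i hi => ?_
      have hiJ : i ∉ J := mem_compl.mp hi
      have : wdg n f (insert i J) = 0 := by
        rw [wdg_apply]
        refine Finset.sum_eq_zero fun k hk => ?_
        have : ((insert i J).erase k).card ≠ p := by
          rw [card_erase_of_mem hk, card_insert_of_notMem hiJ]
          omega
        rw [hsupp _ this, map_zero, smul_zero]
      rw [this, mul_zero, smul_zero]
    have hz2 : wdg n (contr n f) J = 0 := by
      rw [wdg_apply]
      refine Finset.sum_eq_zero fun k hk => ?_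
      have : contr n f (J.erase k) = 0 := by
        rw [contr_apply]
        refine Finset.sum_eq_zero fun i hi => ?_
        have hiE : i ∉ J.erase k := mem_compl.mp hi
        have : (insert i (J.erase k)).card ≠ p := by
          rw [card_insert_of_notMem hiE, card_erase_of_mem hk]
          have := Finset.card_pos.mpr ⟨k, hk⟩
          omega
        rw [hsupp _ this, mul_zero, smul_zero]
      rw [this, map_zero, smul_zero]
    rw [hz1, hz2, add_zero]
  case pos =>
    have e1 : contr n (wdg n f) J
        = (∑ i ∈ Jᶜ, (X i : S n) * pderiv i (f J))
          + ∑ i ∈ Jᶜ, ∑ k ∈ J, (sgn J i * sgn (insert i J) k) •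
              ((X i : S n) * pderiv k (f (insert i (J.erase k)))) := by
      rw [contr_apply, ← Finset.sum_add_distrib]
      refine Finset.sum_congr rfl fun i hi => ?_
      have hiJ : i ∉ J := mem_compl.mp hi
      rw [wdg_apply, Finset.sum_insert hiJ, erase_insert hiJ, sgn_insert_self hiJ,
        mul_add, smul_add]
      congr 1
      · rw [mul_smul_comm, smul_smul, sgn_mul_self, one_smul]
      · rw [mul_sum, smul_sum]
        refine Finset.sum_congr rfl fun k hk => ?_
        have hik : i ≠ k := fun h => hiJ (h ▸ hk)
        rw [erase_insert_of_ne hik, mul_smul_comm, smul_smul]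
    have e2 : wdg n (contr n f) J
        = (∑ k ∈ J, (f J + (X k : S n) * pderiv k (f J)))
          + ∑ k ∈ J, ∑ i ∈ Jᶜ, (sgn J k * sgn (J.erase k) i) •
              ((X i : S n) * pderiv k (f (insert i (J.erase k)))) := by
      rw [wdg_apply, ← Finset.sum_add_distrib]
      refine Finset.sum_congr rfl fun k hk => ?_
      have hkc : k ∉ Jᶜ := by simp [hk]
      rw [contr_apply, compl_erase, Finset.sum_insert hkc, insert_erase hk,
        sgn_erase_self, map_add, smul_add]
      congr 1
      · rw [Derivation.map_smul, smul_smul, sgn_mul_self, one_smul, pderiv_mul,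
          pderiv_X_self, one_mul]
      · rw [map_sum, smul_sum]
        refine Finset.sum_congr rfl fun i hi => ?_
        have hik : i ≠ k := fun h => hkc (h ▸ hi)
        rw [Derivation.map_smul, smul_smul, pderiv_mul, pderiv_X_of_ne hik, zero_mul,
          zero_add]
    have key : ∀ i ∈ Jᶜ, ∀ k ∈ J,
        (sgn J i * sgn (insert i J) k) • ((X i : S n) * pderiv k (f (insert i (J.erase k))))
        + (sgn J k * sgn (J.erase k) i) • ((X i : S n) * pderiv k (f (insert i (J.erase k)))) = 0 := by
      intro i hi k hk
      rw [sgn_offdiag (mem_compl.mp hi) hk, neg_smul, neg_add_cancel]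
    have hX : (∑ i ∈ Jᶜ, ∑ k ∈ J, (sgn J i * sgn (insert i J) k) •
              ((X i : S n) * pderiv k (f (insert i (J.erase k)))))
        + (∑ k ∈ J, ∑ i ∈ Jᶜ, (sgn J k * sgn (J.erase k) i) •
              ((X i : S n) * pderiv k (f (insert i (J.erase k))))) = 0 := by
      rw [Finset.sum_comm (s := Jᶜ) (t := J), ← Finset.sum_add_distrib]
      refine Finset.sum_eq_zero fun k hk => ?_
      rw [← Finset.sum_add_distrib]
      refine Finset.sum_eq_zero fun i hi => ?_
      exact key i hi k hk
    have hD : (∑ i ∈ Jᶜ, (X i : S n) * pderiv i (f J))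
        + (∑ k ∈ J, (f J + (X k : S n) * pderiv k (f J))) = ((t + p : ℕ) : ℂ) • f J := by
      rw [Finset.sum_add_distrib, Finset.sum_const, hJ]
      have hsplit : (∑ k ∈ J, (X k : S n) * pderiv k (f J))
          + ∑ i ∈ Jᶜ, (X i : S n) * pderiv i (f J)
          = ∑ i : Fin (n+1), (X i : S n) * pderiv i (f J) := Finset.sum_add_sum_compl J _
      have heuler := euler (hhom J)
      push_cast
      rw [add_smul, Nat.cast_smul_eq_nsmul ℂ p (f J), ← heuler, ← hsplit]
      abel
    rw [e1, e2, add_add_add_comm, hD, hX, add_zero]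



/-! ### The graded pieces -/

/-- Coefficient functions of a `p`-form with coefficients homogeneous of degree `m - p`. -/
noncomputable def Asub (n p : ℕ) (m : ℤ) : Submodule ℂ (Cc n) where
  carrier := {f | (∀ I, I.card ≠ p → f I = 0) ∧
    ∀ (I : Finset (Fin (n+1))) (d : ℕ), (d:ℤ) ≠ m - p → homogeneousComponent d (f I) = 0}
  add_mem' := by
    rintro a b ⟨ha1, ha2⟩ ⟨hb1, hb2⟩
    refine ⟨fun I h => ?_, fun I d h => ?_⟩
    · simp only [Pi.add_apply, ha1 I h, hb1 I h, add_zero]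
    · simp only [Pi.add_apply, map_add, ha2 I d h, hb2 I d h, add_zero]
  zero_mem' := ⟨fun I _ => rfl, fun I d _ => by simp⟩
  smul_mem' := by
    rintro c a ⟨h1, h2⟩
    refine ⟨fun I h => ?_, fun I d h => ?_⟩
    · simp only [Pi.smul_apply, h1 I h, smul_zero]
    · simp only [Pi.smul_apply, map_smul, h2 I d h, smul_zero]

lemma mem_Asub {n p : ℕ} {m : ℤ} {f : Cc n} :
    f ∈ Asub n p m ↔ (∀ I, I.card ≠ p → f I = 0) ∧
      ∀ (I : Finset (Fin (n+1))) (d : ℕ), (d:ℤ) ≠ m - p → homogeneousComponent d (f I) = 0 :=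
  Iff.rfl

lemma mem_homog_of_Asub {n p : ℕ} {m : ℤ} {f : Cc n} (hf : f ∈ Asub n p m)
    {t : ℕ} (ht : (t:ℤ) = m - p) (I : Finset (Fin (n+1))) :
    f I ∈ homogeneousSubmodule (Fin (n+1)) ℂ t := by
  refine isHomog_of_components fun d hd => hf.2 I d ?_
  rw [← ht]
  exact_mod_cast fun h => hd (by exact_mod_cast h)

lemma eq_zero_of_Asub_neg {n p : ℕ} {m : ℤ} {f : Cc n} (hm : m - p < 0)
    (hf : f ∈ Asub n p m) : f = 0 := by
  funext I
  exact eq_zero_of_components fun d => hf.2 I d (by omega)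

lemma mem_Asub_of {n p : ℕ} {m : ℤ} {f : Cc n} {t : ℕ} (ht : (t:ℤ) = m - p)
    (h1 : ∀ I, I.card ≠ p → f I = 0)
    (h2 : ∀ I, f I ∈ homogeneousSubmodule (Fin (n+1)) ℂ t) : f ∈ Asub n p m := by
  refine ⟨h1, fun I d hd => components_of_isHomog (h2 I) fun h => hd ?_⟩
  rw [h, ht]

lemma contr_mem_Asub {n p : ℕ} {m : ℤ} {f : Cc n} (hf : f ∈ Asub n (p+1) m) :
    contr n f ∈ Asub n p m := by
  by_cases hm : 0 ≤ m - (p+1 : ℕ)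
  · set t := (m - (p+1 : ℕ)).toNat with htdef
    have ht : (t:ℤ) = m - (p+1 : ℕ) := Int.toNat_of_nonneg hm
    refine mem_Asub_of (t := t+1) (by push_cast; omega) (fun J hJ => ?_) (fun J => ?_)
    · rw [contr_apply]
      refine Finset.sum_eq_zero fun i hi => ?_
      have : (insert i J).card ≠ p + 1 := by
        rw [card_insert_of_notMem (mem_compl.mp hi)]
        omega
      rw [hf.1 _ this, mul_zero, smul_zero]
    · rw [contr_apply]
      refine Submodule.sum_mem _ fun i _ => Submodule.smul_mem _ _ ?_
      refine (mem_homogeneousSubmodule _ _).mpr ?_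
      have h1 : (X i : S n).IsHomogeneous 1 := isHomogeneous_X ℂ i
      have h2 := (mem_homogeneousSubmodule _ _).mp (mem_homog_of_Asub hf ht (insert i J))
      rw [mul_comm]
      exact h2.mul h1
  · have : f = 0 := eq_zero_of_Asub_neg (by omega) hf
    rw [this, map_zero]
    exact Submodule.zero_mem _

lemma wdg_mem_Asub {n p : ℕ} {m : ℤ} {f : Cc n} (hpm : (p:ℤ) < m) (hf : f ∈ Asub n p m) :
    wdg n f ∈ Asub n (p+1) m := by
  set t := (m - p).toNat with htdef
  have ht : (t:ℤ) = m - p := Int.toNat_of_nonneg (by omega)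
  have ht1 : 1 ≤ t := by omega
  refine mem_Asub_of (t := t-1) (by push_cast; omega) (fun K hK => ?_) (fun K => ?_)
  · rw [wdg_apply]
    refine Finset.sum_eq_zero fun i hi => ?_
    have hKc : 1 ≤ K.card := Finset.card_pos.mpr ⟨i, hi⟩
    have : (K.erase i).card ≠ p := by
      rw [card_erase_of_mem hi]
      omega
    rw [hf.1 _ this, map_zero, smul_zero]
  · rw [wdg_apply]
    refine Submodule.sum_mem _ fun i _ => Submodule.smul_mem _ _ ?_
    exact pderiv_isHomog (mem_homog_of_Asub hf ht _) i

/-- The kernel piece: concrete model of `H^0(ℙⁿ, Ω^p(m))` in coordinates. -/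
noncomputable def Ksub (n p : ℕ) (m : ℤ) : Submodule ℂ (Cc n) :=
  Asub n p m ⊓ LinearMap.ker (contr n)

lemma Ksub_zero (n : ℕ) (m : ℤ) : Ksub n 0 m = Asub n 0 m := by
  refine le_antisymm inf_le_left (le_inf le_rfl fun f hf => ?_)
  simp only [LinearMap.mem_ker]
  funext J
  rw [contr_apply]
  refine Finset.sum_eq_zero fun i hi => ?_
  have : (insert i J).card ≠ 0 := by
    rw [card_insert_of_notMem (mem_compl.mp hi)]
    omega
  rw [hf.1 _ this, mul_zero, smul_zero]



/-! ### Dimension of the space of homogeneous polynomials -/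

lemma multiset_card_toFinsupp {α : Type*} [DecidableEq α] (s : Multiset α) :
    Finsupp.degree (Multiset.toFinsupp s) = Multiset.card s := by
  have h := Finsupp.card_toMultiset (Multiset.toFinsupp s)
  rw [Multiset.toFinsupp_toMultiset] at h
  rw [h]
  rfl

lemma finite_degree_eq (n t : ℕ) : Finite {d : Fin (n+1) →₀ ℕ // Finsupp.degree d = t} := by
  have h : {f : Fin (n+1) →₀ ℕ | Finsupp.degree f = t}.Finite :=
    (Finsupp.finite_of_degree_le t).subset (fun d hd => le_of_eq hd)
  exact h.to_subtype

noncomputable def symEquivDegree (n t : ℕ) :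
    Sym (Fin (n+1)) t ≃ {d : Fin (n+1) →₀ ℕ // Finsupp.degree d = t} :=
  Equiv.subtypeEquiv (Multiset.toFinsupp : Multiset (Fin (n+1)) ≃+ ((Fin (n+1)) →₀ ℕ)).toEquiv
    (fun s => by
      constructor
      · intro h
        rw [AddEquiv.toEquiv_eq_coe]
        show Finsupp.degree (Multiset.toFinsupp s) = t
        rw [multiset_card_toFinsupp, h]
      · intro h
        rw [AddEquiv.toEquiv_eq_coe] at h
        have : Finsupp.degree (Multiset.toFinsupp s) = t := h
        rwa [multiset_card_toFinsupp] at this)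

lemma li_monomials (n t : ℕ) :
    LinearIndependent ℂ (fun d : {d : Fin (n+1) →₀ ℕ // Finsupp.degree d = t} =>
      (monomial d.1 (1:ℂ) : S n)) := by
  have h := (MvPolynomial.basisMonomials (Fin (n+1)) ℂ).linearIndependent
  have h2 := h.comp (Subtype.val : {d : Fin (n+1) →₀ ℕ // Finsupp.degree d = t} → (Fin (n+1) →₀ ℕ)) Subtype.val_injective
  have : (⇑(MvPolynomial.basisMonomials (Fin (n+1)) ℂ) ∘ Subtype.val)
      = (fun d : {d : Fin (n+1) →₀ ℕ // Finsupp.degree d = t} => (monomial d.1 (1:ℂ) : S n)) := by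
    funext d
    simp [MvPolynomial.coe_basisMonomials]
  rwa [this] at h2

lemma span_monomials (n t : ℕ) :
    Submodule.span ℂ (Set.range (fun d : {d : Fin (n+1) →₀ ℕ // Finsupp.degree d = t} =>
        (monomial d.1 (1:ℂ) : S n)))
      = homogeneousSubmodule (Fin (n+1)) ℂ t := by
  apply le_antisymm
  · rw [Submodule.span_le]
    rintro _ ⟨d, rfl⟩
    exact (mem_homogeneousSubmodule _ _).mpr (isHomogeneous_monomial _ d.2)
  · intro g hg
    have hsum : g = ∑ d ∈ g.support, monomial d (coeff d g) :=
      (support_sum_monomial_coeff g).symm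
    rw [hsum]
    refine Submodule.sum_mem _ fun d hd => ?_
    have hdeg : Finsupp.degree d = t := by
      by_contra hne
      exact (mem_support_iff.mp hd)
        (((mem_homogeneousSubmodule _ _).mp hg).coeff_eq_zero hne)
    have hmon : (monomial d (coeff d g) : S n) = (coeff d g) • monomial d (1:ℂ) := by
      rw [smul_monomial, smul_eq_mul, mul_one]
    rw [hmon]
    exact Submodule.smul_mem _ _ (Submodule.subset_span ⟨⟨d, hdeg⟩, rfl⟩)

noncomputable def homogBasis (n t : ℕ) :
    Module.Basis {d : Fin (n+1) →₀ ℕ // Finsupp.degree d = t} ℂ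
      (homogeneousSubmodule (Fin (n+1)) ℂ t) :=
  (Module.Basis.span (li_monomials n t)).map (LinearEquiv.ofEq _ _ (span_monomials n t))

lemma finiteDimensional_homog (n t : ℕ) :
    FiniteDimensional ℂ (homogeneousSubmodule (Fin (n+1)) ℂ t) := by
  haveI := finite_degree_eq n t
  exact Module.Finite.of_basis (homogBasis n t)

lemma finrank_homog (n t : ℕ) :
    Module.finrank ℂ (homogeneousSubmodule (Fin (n+1)) ℂ t) = (t + n).choose t := by
  haveI := finite_degree_eq n t
  haveI := Fintype.ofFinite {d : Fin (n+1) →₀ ℕ // Finsupp.degree d = t}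
  rw [Module.finrank_eq_card_basis (homogBasis n t), ← Nat.card_eq_fintype_card,
    ← Nat.card_congr (symEquivDegree n t), Nat.card_eq_fintype_card,
    Sym.card_sym_eq_multichoose, Fintype.card_fin, Nat.multichoose_eq]
  congr 1
  omega

/-! ### Dimension of `Asub` -/

noncomputable def AsubEquiv (n p : ℕ) (m : ℤ) {t : ℕ} (ht : (t:ℤ) = m - p) :
    (Asub n p m) ≃ₗ[ℂ]
      ({I : Finset (Fin (n+1)) // I.card = p} → homogeneousSubmodule (Fin (n+1)) ℂ t) where
  toFun f I := ⟨f.1 I.1, mem_homog_of_Asub f.2 ht I.1⟩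
  map_add' f g := rfl
  map_smul' c f := rfl
  invFun g := ⟨fun I => if h : I.card = p then (g ⟨I, h⟩).1 else 0,
    mem_Asub_of ht (fun I hI => dif_neg hI) (fun I => by
      by_cases h : I.card = p
      · rw [dif_pos h]; exact (g ⟨I, h⟩).2
      · rw [dif_neg h]; exact Submodule.zero_mem _)⟩
  left_inv f := by
    apply Subtype.ext
    funext I
    dsimp only
    by_cases h : I.card = p
    · exact dif_pos h
    · rw [dif_neg h]
      exact (f.2.1 I h).symm
  right_inv g := by
    funext I
    apply Subtype.ext
    show (if h : I.1.card = p then (g ⟨I.1, h⟩).1 else 0) = (g I).1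
    rw [dif_pos I.2]

lemma finiteDimensional_Asub (n p : ℕ) (m : ℤ) : FiniteDimensional ℂ (Asub n p m) := by
  by_cases hm : 0 ≤ m - p
  · haveI := fun I : {I : Finset (Fin (n+1)) // I.card = p} =>
      finiteDimensional_homog n (m - p).toNat
    haveI : FiniteDimensional ℂ
        ({I : Finset (Fin (n+1)) // I.card = p} →
          homogeneousSubmodule (Fin (n+1)) ℂ (m - p).toNat) := by
      haveI := finiteDimensional_homog n (m - p).toNat
      infer_instance
    exact (AsubEquiv n p m (Int.toNat_of_nonneg hm)).symm.finiteDimensional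
  · have hbot : Asub n p m = ⊥ := by
      refine le_antisymm (fun f hf => ?_) bot_le
      simp only [Submodule.mem_bot]
      exact eq_zero_of_Asub_neg (by omega) hf
    rw [hbot]
    infer_instance

lemma finrank_Asub (n p : ℕ) {m : ℤ} {t : ℕ} (ht : (t:ℤ) = m - p) :
    Module.finrank ℂ (Asub n p m) = (n+1).choose p * (t + n).choose t := by
  haveI := finiteDimensional_homog n t
  rw [LinearEquiv.finrank_eq (AsubEquiv n p m ht), Module.finrank_pi_fintype,
    Finset.sum_const, Finset.card_univ, smul_eq_mul, finrank_homog]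
  congr 1
  have : Fintype.card {I : Finset (Fin (n+1)) // I.card = p}
      = (Fintype.card (Fin (n+1))).choose p := Fintype.card_finset_len p
  rw [this, Fintype.card_fin]


/-! ### Rank-nullity recursion -/

lemma range_restrict_eq (n p : ℕ) (m : ℤ) (hpm : (p:ℤ) < m) :
    LinearMap.range ((contr n).domRestrict (Asub n (p+1) m)) = Ksub n p m := by
  apply le_antisymm
  · rintro _ ⟨⟨f, hf⟩, rfl⟩
    simp only [LinearMap.domRestrict_apply]
    refine Submodule.mem_inf.mpr ⟨contr_mem_Asub hf, ?_⟩
    rw [LinearMap.mem_ker, contr_contr]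
  · rintro g hg
    obtain ⟨hgA, hgK⟩ := Submodule.mem_inf.mp hg
    rw [LinearMap.mem_ker] at hgK
    set t := (m - p).toNat with htdef
    have ht : (t:ℤ) = m - p := Int.toNat_of_nonneg (by omega)
    have hhomot := homotopy g hgA.1 (mem_homog_of_Asub hgA ht)
    rw [hgK, map_zero, add_zero] at hhomot
    have htp : ((t + p : ℕ) : ℂ) ≠ 0 := by
      refine Nat.cast_ne_zero.mpr ?_
      omega
    refine ⟨⟨((t + p : ℕ) : ℂ)⁻¹ • wdg n g,
      Submodule.smul_mem _ _ (wdg_mem_Asub hpm hgA)⟩, ?_⟩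
    simp only [LinearMap.domRestrict_apply, map_smul]
    rw [hhomot, smul_smul, inv_mul_cancel₀ htp, one_smul]

lemma ker_finrank_eq (n p : ℕ) (m : ℤ) :
    Module.finrank ℂ (LinearMap.ker ((contr n).domRestrict (Asub n (p+1) m)))
      = Module.finrank ℂ (Ksub n (p+1) m) := by
  have hle : Ksub n (p+1) m ≤ Asub n (p+1) m := inf_le_left
  have hker : LinearMap.ker ((contr n).domRestrict (Asub n (p+1) m))
      = Submodule.comap (Asub n (p+1) m).subtype (Ksub n (p+1) m) := by
    ext x
    rw [LinearMap.mem_ker, LinearMap.domRestrict_apply, Submodule.mem_comap]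
    constructor
    · intro hx
      exact Submodule.mem_inf.mpr ⟨x.2, LinearMap.mem_ker.mpr hx⟩
    · intro hx
      exact LinearMap.mem_ker.mp (Submodule.mem_inf.mp hx).2
  rw [hker]
  exact LinearEquiv.finrank_eq (Submodule.comapSubtypeEquivOfLe hle)

lemma rank_step (n p : ℕ) (m : ℤ) (hpm : (p:ℤ) < m) :
    Module.finrank ℂ (Ksub n (p+1) m) + Module.finrank ℂ (Ksub n p m)
      = Module.finrank ℂ (Asub n (p+1) m) := by
  haveI := finiteDimensional_Asub n (p+1) m
  have h := LinearMap.finrank_range_add_finrank_ker ((contr n).domRestrict (Asub n (p+1) m))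
  rw [range_restrict_eq n p m hpm, ker_finrank_eq n p m] at h
  omega

/-! ### The binomial identity -/

lemma binom_key (i u e : ℕ) :
    (i+u+1).choose (i+1) * (i+u+e+2).choose e + (i+u+1).choose i * (i+u+e+3).choose (e+1)
      = (i+e+2).choose (i+1) * (i+u+e+2).choose (u+1) := by
  have h1 : (i+1) ≤ i+u+1 := by omega
  have h2 : e ≤ i+u+e+2 := by omega
  have h3 : i ≤ i+u+1 := by omega
  have h4 : (e+1) ≤ i+u+e+3 := by omega
  have h5 : (i+1) ≤ i+e+2 := by omega
  have h6 : (u+1) ≤ i+u+e+2 := by omega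
  rw [← @Nat.cast_inj ℚ]
  push_cast
  rw [Nat.cast_choose ℚ h1, Nat.cast_choose ℚ h2, Nat.cast_choose ℚ h3,
    Nat.cast_choose ℚ h4, Nat.cast_choose ℚ h5, Nat.cast_choose ℚ h6]
  rw [show i+u+1-(i+1) = u from by omega, show i+u+e+2-e = i+u+2 from by omega,
    show i+u+1-i = u+1 from by omega, show i+u+e+3-(e+1) = i+u+2 from by omega,
    show i+e+2-(i+1) = e+1 from by omega, show i+u+e+2-(u+1) = i+e+1 from by omega]
  have f1 : ((i+u+e+3).factorial : ℚ) = (i+u+e+3) * (i+u+e+2).factorial := by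
    rw [show i+u+e+3 = (i+u+e+2)+1 from rfl, Nat.factorial_succ]; push_cast; ring
  have f2 : ((i+1).factorial : ℚ) = (i+1) * i.factorial := by
    rw [Nat.factorial_succ]; push_cast; ring
  have f3 : ((u+1).factorial : ℚ) = (u+1) * u.factorial := by
    rw [Nat.factorial_succ]; push_cast; ring
  have f4 : ((e+1).factorial : ℚ) = (e+1) * e.factorial := by
    rw [Nat.factorial_succ]; push_cast; ring
  have f5 : ((i+e+2).factorial : ℚ) = (i+e+2) * (i+e+1).factorial := by
    rw [show i+e+2 = (i+e+1)+1 from rfl, Nat.factorial_succ]; push_cast; ring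
  have f6 : ((i+u+2).factorial : ℚ) = (i+u+2) * (i+u+1).factorial := by
    rw [show i+u+2 = (i+u+1)+1 from rfl, Nat.factorial_succ]; push_cast; ring
  rw [f1, f2, f3, f4, f5, f6]
  have n1 : (Nat.factorial i : ℚ) ≠ 0 := Nat.cast_ne_zero.mpr (Nat.factorial_ne_zero _)
  have n2 : (Nat.factorial u : ℚ) ≠ 0 := Nat.cast_ne_zero.mpr (Nat.factorial_ne_zero _)
  have n3 : (Nat.factorial e : ℚ) ≠ 0 := Nat.cast_ne_zero.mpr (Nat.factorial_ne_zero _)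
  have n4 : (Nat.factorial (i+u+1) : ℚ) ≠ 0 := Nat.cast_ne_zero.mpr (Nat.factorial_ne_zero _)
  have n5 : (Nat.factorial (i+e+1) : ℚ) ≠ 0 := Nat.cast_ne_zero.mpr (Nat.factorial_ne_zero _)
  have n6 : (Nat.factorial (i+u+e+2) : ℚ) ≠ 0 := Nat.cast_ne_zero.mpr (Nat.factorial_ne_zero _)
  have p1 : ((i:ℚ)+1) ≠ 0 := by positivity
  have p2 : ((u:ℚ)+1) ≠ 0 := by positivity
  have p3 : ((e:ℚ)+1) ≠ 0 := by positivity
  have p4 : ((i:ℚ)+(u:ℚ)+2) ≠ 0 := by positivity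
  have p5 : ((i:ℚ)+(e:ℚ)+2) ≠ 0 := by positivity
  have p6 : ((i:ℚ)+(u:ℚ)+(e:ℚ)+3) ≠ 0 := by positivity
  field_simp
  ring

lemma binom_main (n M q : ℕ) (hqn : q + 1 ≤ n) (hqM : q + 1 < M) :
    (M-1).choose (q+1) * (M+n-(q+1)).choose (n-(q+1))
      + (M-1).choose q * (M+n-q).choose (n-q)
    = (n+1).choose (q+1) * ((M-(q+1)) + n).choose (M-(q+1)) := by
  obtain ⟨u, rfl⟩ : ∃ u, M = q+2+u := ⟨M-q-2, by omega⟩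
  obtain ⟨e, rfl⟩ : ∃ e, n = q+1+e := ⟨n-q-1, by omega⟩
  have key := binom_key q u e
  have r1 : (q+2+u)-1 = q+u+1 := by omega
  have r2 : (q+2+u)+(q+1+e)-(q+1) = q+u+e+2 := by omega
  have r3 : (q+1+e)-(q+1) = e := by omega
  have r4 : (q+2+u)+(q+1+e)-q = q+u+e+3 := by omega
  have r5 : (q+1+e)-q = e+1 := by omega
  have r6 : (q+1+e)+1 = q+e+2 := by omega
  have r7 : ((q+2+u)-(q+1)) + (q+1+e) = q+u+e+2 := by omega
  have r8 : (q+2+u)-(q+1) = u+1 := by omega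
  rw [r1, r2, r3, r4, r5, r6, r7, r8]
  exact key

/-! ### The dimension count -/

lemma count_K (n M : ℕ) :
    ∀ p : ℕ, p ≤ n → p < M →
      Module.finrank ℂ (Ksub n p (M:ℤ)) = (M-1).choose p * (M + n - p).choose (n - p) := by
  intro p
  induction p with
  | zero =>
    intro _ _
    rw [Ksub_zero, finrank_Asub n 0 (m := (M:ℤ)) (t := M) (by push_cast; ring)]
    simp only [Nat.choose_zero_right, one_mul, Nat.sub_zero]
    have : (M+n).choose M = (M+n).choose n := by
      have h := Nat.choose_symm (show n ≤ M + n from by omega)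
      rw [show M+n-n = M from by omega] at h
      exact h
    rw [this]
  | succ q IH =>
    intro hqn hqM
    have h1 := rank_step n q (M:ℤ) (by exact_mod_cast (by omega : q < M))
    have hA := finrank_Asub n (q+1) (m := (M:ℤ)) (t := M - (q+1)) (by push_cast; omega)
    have hIH := IH (by omega) (by omega)
    have hbin := binom_main n M q hqn hqM
    rw [hIH] at h1
    -- hA : finrank (Asub n (q+1) M) = (n+1).choose (q+1) * ((M-(q+1)) + n).choose (M-(q+1))
    omega


/-! ### Transfer: alternating maps ↔ coordinates -/

abbrev Vv (n : ℕ) := Fin (n+1) → ℂ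
abbrev Mp (n p : ℕ) := AlternatingMap ℂ (Vv n) (S n) (Fin p)

/-- The basis tuple attached to a subset. -/
noncomputable def btup {n p : ℕ} (I : Finset (Fin (n+1))) (h : I.card = p) : Fin p → Vv n :=
  fun j => Pi.single (I.orderEmbOfFin h j) 1

/-- Coordinates of an alternating map. -/
noncomputable def tc (n p : ℕ) : Mp n p →ₗ[ℂ] Cc n where
  toFun ω I := if h : I.card = p then ω (btup I h) else 0
  map_add' ω η := by
    funext I
    by_cases h : I.card = p
    · simp [dif_pos h]
    · simp [dif_neg h]
  map_smul' c ω := by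
    funext I
    by_cases h : I.card = p
    · simp [dif_pos h]
    · simp [dif_neg h]

lemma tc_apply_pos {n p : ℕ} (ω : Mp n p) {I : Finset (Fin (n+1))} (h : I.card = p) :
    tc n p ω I = ω (btup I h) := dif_pos h

lemma tc_apply_neg {n p : ℕ} (ω : Mp n p) {I : Finset (Fin (n+1))} (h : I.card ≠ p) :
    tc n p ω I = 0 := dif_neg h

/-- Elementary "sub-determinant" alternating forms. -/
noncomputable def delta {n p : ℕ} (I : Finset (Fin (n+1))) (h : I.card = p) :
    AlternatingMap ℂ (Vv n) ℂ (Fin p) :=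
  (Matrix.detRowAlternating (n := Fin p) (R := ℂ)).compLinearMap
    (LinearMap.funLeft ℂ ℂ (I.orderEmbOfFin h))

lemma delta_btup {n p : ℕ} (I I' : Finset (Fin (n+1))) (h : I.card = p) (h' : I'.card = p) :
    delta I h (btup I' h') = if I' = I then 1 else 0 := by
  rw [delta, AlternatingMap.compLinearMap_apply]
  by_cases heq : I' = I
  · subst heq
    rw [if_pos rfl]
    have hfun : (fun k => LinearMap.funLeft ℂ ℂ (I'.orderEmbOfFin h) (btup I' h' k))
        = (1 : Matrix (Fin p) (Fin p) ℂ) := by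
      funext k j
      rw [LinearMap.funLeft_apply, btup]
      simp only [Matrix.one_apply, Pi.single_apply]
      by_cases hkj : k = j
      · subst hkj; simp
      · rw [if_neg, if_neg hkj]
        intro hEq
        exact hkj ((I'.orderEmbOfFin h').injective hEq).symm
    rw [hfun]
    exact Matrix.det_one
  · rw [if_neg heq]
    have hex : ∃ x ∈ I', x ∉ I := by
      by_contra hno
      push_neg at hno
      exact heq (Finset.eq_of_subset_of_card_le hno (le_of_eq (h.trans h'.symm)))
    obtain ⟨x, hxI', hxI⟩ := hex
    obtain ⟨k, hk⟩ : ∃ k, I'.orderEmbOfFin h' k = x := by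
      have hx : x ∈ Set.range (I'.orderEmbOfFin h') := by
        rw [Finset.range_orderEmbOfFin]
        exact_mod_cast hxI'
      exact hx
    refine Matrix.det_eq_zero_of_row_eq_zero k fun j => ?_
    show LinearMap.funLeft ℂ ℂ (I.orderEmbOfFin h) (btup I' h' k) j = 0
    rw [LinearMap.funLeft_apply, btup]
    refine Pi.single_eq_of_ne ?_ _
    rw [hk]
    intro hEq
    exact hxI (hEq ▸ Finset.orderEmbOfFin_mem I h j)

noncomputable def deltaS {n p : ℕ} (I : Finset (Fin (n+1))) (h : I.card = p) : Mp n p :=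
  (Algebra.linearMap ℂ (S n)).compAlternatingMap (delta I h)

lemma sum_apply_alt {n p : ℕ} {ι : Type*} (s : Finset ι) (F : ι → Mp n p) (v : Fin p → Vv n) :
    (∑ i ∈ s, F i) v = ∑ i ∈ s, F i v := by
  induction s using Finset.cons_induction with
  | empty => rfl
  | cons a s ha ih => rw [Finset.sum_cons, Finset.sum_cons, AlternatingMap.add_apply, ih]

lemma smul_smul_alt {n p : ℕ} (c : ℂ) (s : S n) (η : Mp n p) :
    (c • s) • η = c • (s • η) :=
  AlternatingMap.ext fun v => by
    rw [AlternatingMap.smul_apply, AlternatingMap.smul_apply, AlternatingMap.smul_apply,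
      smul_assoc]

/-- Alternating map from coordinates. -/
noncomputable def oc (n p : ℕ) : Cc n →ₗ[ℂ] Mp n p where
  toFun f := ∑ I : {I : Finset (Fin (n+1)) // I.card = p}, f I.1 • deltaS I.1 I.2
  map_add' f g := by
    simp only [Pi.add_apply, add_smul, Finset.sum_add_distrib]
  map_smul' c f := by
    simp only [RingHom.id_apply, Pi.smul_apply, smul_smul_alt, Finset.smul_sum]

lemma oc_btup {n p : ℕ} (f : Cc n) (I : Finset (Fin (n+1))) (h : I.card = p) :
    oc n p f (btup I h) = f I := by
  show (∑ I' : {I : Finset (Fin (n+1)) // I.card = p}, f I'.1 • deltaS I'.1 I'.2) (btup I h) = f I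
  rw [sum_apply_alt Finset.univ (fun I' : {I : Finset (Fin (n+1)) // I.card = p} =>
    f I'.1 • deltaS I'.1 I'.2) (btup I h)]
  rw [Finset.sum_eq_single (⟨I, h⟩ : {I : Finset (Fin (n+1)) // I.card = p})]
  · rw [AlternatingMap.smul_apply, deltaS, LinearMap.compAlternatingMap_apply, delta_btup,
      if_pos rfl, Algebra.linearMap_apply, map_one, smul_eq_mul, mul_one]
  · intro I' _ hne
    rw [AlternatingMap.smul_apply, deltaS, LinearMap.compAlternatingMap_apply, delta_btup,
      if_neg (fun hEq => hne (Subtype.ext hEq.symm)), map_zero, smul_zero]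
  · intro habs
    exact absurd (Finset.mem_univ _) habs

lemma exists_perm_btup {n p : ℕ} (v : Fin p → Fin (n+1)) (hv : Function.Injective v) :
    ∃ (I : Finset (Fin (n+1))) (h : I.card = p) (σ : Equiv.Perm (Fin p)),
      (fun j => (Pi.single (v j) 1 : Vv n)) = btup I h ∘ ⇑σ := by
  set I := Finset.image v Finset.univ with hI
  have h : I.card = p := by
    rw [hI, Finset.card_image_of_injective _ hv, Finset.card_univ, Fintype.card_fin]
  have hmem : ∀ j, v j ∈ I := fun j => Finset.mem_image.mpr ⟨j, Finset.mem_univ j, rfl⟩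
  set c : Fin p → Fin p := fun j => (I.orderIsoOfFin h).symm ⟨v j, hmem j⟩ with hc
  have hcinj : Function.Injective c := by
    intro a b hab
    apply hv
    have h2 := congrArg (fun x => ((I.orderIsoOfFin h) x : Fin (n+1))) hab
    simpa [hc] using h2
  have hcbij := Finite.injective_iff_bijective.mp hcinj
  refine ⟨I, h, Equiv.ofBijective c hcbij, ?_⟩
  funext j
  show Pi.single (v j) 1 = btup I h (Equiv.ofBijective c hcbij j)
  have hemb : I.orderEmbOfFin h (c j) = v j := by
    rw [← Finset.coe_orderIsoOfFin_apply, hc]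
    simp
  rw [btup, Equiv.ofBijective_apply, hemb]

lemma oc_tc {n p : ℕ} (ω : Mp n p) : oc n p (tc n p ω) = ω := by
  refine Module.Basis.ext_alternating (Pi.basisFun ℂ (Fin (n+1))) ?_
  intro v hv
  obtain ⟨I, h, σ, hperm⟩ := exists_perm_btup v hv
  have hvec : (fun i => Pi.basisFun ℂ (Fin (n+1)) (v i)) = (btup I h) ∘ ⇑σ := by
    funext i
    rw [Pi.basisFun_apply]
    exact congrFun hperm i
  have key : ∀ η : Mp n p, (η fun i => Pi.basisFun ℂ (Fin (n+1)) (v i))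
      = Equiv.Perm.sign σ • η (btup I h) := by
    intro η
    rw [hvec, AlternatingMap.map_perm]
  rw [key, key]
  congr 1
  rw [oc_btup, tc_apply_pos ω h]

lemma tc_injective (n p : ℕ) : Function.Injective (tc n p) := by
  intro a b hab
  rw [← oc_tc a, ← oc_tc b, hab]

/-! ### order combinatorics for the contraction transfer -/

lemma idx_eq_cnt {n r : ℕ} (K : Finset (Fin (n+1))) (hK : K.card = r) {x : Fin (n+1)}
    (hx : x ∈ K) :
    (((K.orderIsoOfFin hK).symm ⟨x, hx⟩ : Fin r) : ℕ) = cnt K x := by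
  set l := (K.orderIsoOfFin hK).symm ⟨x, hx⟩ with hl
  have hembl : K.orderEmbOfFin hK l = x := by
    rw [← Finset.coe_orderIsoOfFin_apply, hl]
    simp
  have hmono : StrictMono (K.orderEmbOfFin hK) := OrderEmbedding.strictMono _
  have himg : K.filter (· < x) = Finset.image (K.orderEmbOfFin hK) (Finset.Iio l) := by
    ext y
    simp only [Finset.mem_filter, Finset.mem_image, Finset.mem_Iio]
    constructor
    · rintro ⟨hyK, hyx⟩
      refine ⟨(K.orderIsoOfFin hK).symm ⟨y, hyK⟩, ?_, ?_⟩
      · have hy : K.orderEmbOfFin hK ((K.orderIsoOfFin hK).symm ⟨y, hyK⟩) = y := by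
          rw [← Finset.coe_orderIsoOfFin_apply]
          simp
        rw [← hembl, ← hy] at hyx
        exact hmono.lt_iff_lt.mp hyx
      · rw [← Finset.coe_orderIsoOfFin_apply]
        simp
    · rintro ⟨a, hal, rfl⟩
      refine ⟨Finset.orderEmbOfFin_mem _ _ _, ?_⟩
      rw [← hembl]
      exact hmono hal
  rw [cnt, himg, Finset.card_image_of_injective _ (K.orderEmbOfFin hK).injective, Fin.card_Iio]

lemma sign_smul_eq {n : ℕ} (k : ℕ) (x : S n) :
    (((-1 : ℤˣ) ^ k) • x) = ((-1 : ℂ) ^ k) • x := by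
  rcases Nat.even_or_odd k with hk | hk
  · rw [Even.neg_one_pow hk, Even.neg_one_pow hk, one_smul, one_smul]
  · rw [Odd.neg_one_pow hk, Odd.neg_one_pow hk, Units.neg_smul, one_smul, neg_one_smul]

lemma vecCons_btup {n q : ℕ} {J : Finset (Fin (n+1))} (hJ : J.card = q) {i : Fin (n+1)}
    (hi : i ∉ J) :
    ∃ (hins : (insert i J).card = q + 1) (k : Fin (q+1)),
      (k : ℕ) = cnt J i ∧
      Matrix.vecCons (Pi.single i (1:ℂ)) (btup J hJ)
        = btup (insert i J) hins ∘ ⇑((k.cycleRange)⁻¹ : Equiv.Perm (Fin (q+1))) := by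
  have hins : (insert i J).card = q+1 := by rw [card_insert_of_notMem hi, hJ]
  set k := ((insert i J).orderIsoOfFin hins).symm ⟨i, mem_insert_self i J⟩ with hk
  have hembk : (insert i J).orderEmbOfFin hins k = i := by
    rw [← Finset.coe_orderIsoOfFin_apply, hk]
    simp
  have hsucc : (fun l => (insert i J).orderEmbOfFin hins (k.succAbove l)) = ⇑(J.orderEmbOfFin hJ) := by
    refine Finset.orderEmbOfFin_unique hJ (fun l => ?_) ?_
    · have hm : (insert i J).orderEmbOfFin hins (k.succAbove l) ∈ insert i J :=
        Finset.orderEmbOfFin_mem _ _ _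
      have hne : (insert i J).orderEmbOfFin hins (k.succAbove l) ≠ i := by
        intro hEq
        exact Fin.succAbove_ne k l
          (((insert i J).orderEmbOfFin hins).injective (hEq.trans hembk.symm))
      exact Finset.mem_of_mem_insert_of_ne hm hne
    · exact (OrderEmbedding.strictMono _).comp (Fin.strictMono_succAbove k)
  refine ⟨hins, k, ?_, ?_⟩
  · rw [hk, idx_eq_cnt (insert i J) hins (mem_insert_self i J), cnt_insert hi,
      if_neg (lt_irrefl i), add_zero]
  · funext j
    refine Fin.cases ?_ ?_ j
    · show Pi.single i 1 = btup (insert i J) hins ((k.cycleRange)⁻¹ 0)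
      have h0 : ((k.cycleRange)⁻¹ : Equiv.Perm (Fin (q+1))) 0 = k := by
        show (k.cycleRange).symm 0 = k
        rw [Equiv.symm_apply_eq, Fin.cycleRange_self]
      rw [h0, btup, hembk]
    · intro l
      show btup J hJ l = btup (insert i J) hins ((k.cycleRange)⁻¹ l.succ)
      have hstep : ((k.cycleRange)⁻¹ : Equiv.Perm (Fin (q+1))) l.succ = k.succAbove l := by
        show (k.cycleRange).symm l.succ = k.succAbove l
        exact Fin.cycleRange_symm_succ k l
      rw [hstep, btup, btup, ← congrFun hsucc l]

lemma matrix_cons_val_succ' {n q : ℕ} (x : Vv n) (u : Fin q → Vv n) (l : Fin q) :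
    Matrix.vecCons x u l.succ = u l := Matrix.cons_val_succ x u l

/-- The alternating-map avatar of the Euler contraction. -/
noncomputable def gmap {n q : ℕ} (ω : Mp n (q+1)) : Mp n q :=
  ∑ i : Fin (n+1), (X i : S n) • (ω.curryLeft (Pi.single i 1))

lemma gmap_apply {n q : ℕ} (ω : Mp n (q+1)) (u : Fin q → Vv n) :
    gmap ω u = ∑ i : Fin (n+1), X i * ω (Matrix.vecCons (Pi.single i 1) u) := by
  rw [gmap, sum_apply_alt]
  refine Finset.sum_congr rfl fun i _ => ?_
  rw [AlternatingMap.smul_apply, smul_eq_mul]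
  rfl

lemma tc_contr {n q : ℕ} (ω : Mp n (q+1)) :
    contr n (tc n (q+1) ω) = tc n q (gmap ω) := by
  funext J
  by_cases hJ : J.card = q
  case neg =>
    rw [contr_apply]
    have h1 : ∀ i ∈ Jᶜ, sgn J i • ((X i : S n) * tc n (q+1) ω (insert i J)) = 0 := by
      intro i hi
      have hcard : (insert i J).card ≠ q+1 := by
        rw [card_insert_of_notMem (mem_compl.mp hi)]
        omega
      rw [tc_apply_neg ω hcard, mul_zero, smul_zero]
    rw [Finset.sum_eq_zero h1, tc_apply_neg _ hJ]
  case pos =>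
    rw [contr_apply, tc_apply_pos (gmap ω) hJ, gmap_apply, ← Finset.sum_add_sum_compl J]
    have hz : ∑ i ∈ J, (X i : S n) * ω (Matrix.vecCons (Pi.single i 1) (btup J hJ)) = 0 := by
      refine Finset.sum_eq_zero fun i hi => ?_
      have hembl : J.orderEmbOfFin hJ ((J.orderIsoOfFin hJ).symm ⟨i, hi⟩) = i := by
        rw [← Finset.coe_orderIsoOfFin_apply]
        simp
      have hdup : Matrix.vecCons (Pi.single i (1:ℂ)) (btup J hJ) 0
          = Matrix.vecCons (Pi.single i (1:ℂ)) (btup J hJ)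
              ((J.orderIsoOfFin hJ).symm ⟨i, hi⟩).succ := by
        rw [Matrix.cons_val_zero, matrix_cons_val_succ', btup, hembl]
      rw [AlternatingMap.map_eq_zero_of_eq _ _ hdup (Fin.succ_ne_zero _).symm, mul_zero]
    rw [hz, zero_add]
    refine Finset.sum_congr rfl fun i hi => ?_
    have hiJ : i ∉ J := mem_compl.mp hi
    obtain ⟨hins, k, hkcnt, hperm⟩ := vecCons_btup hJ hiJ
    rw [tc_apply_pos ω hins, hperm, AlternatingMap.map_perm, Equiv.Perm.sign_inv,
      Fin.sign_cycleRange, sign_smul_eq, hkcnt, mul_smul_comm]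
    rfl


end Bott

/-- Concrete model of `H^0(ℙ^n, Ω^p(m))`: polynomial-coefficient alternating `p`-forms
`ω = Σ f_I dx_I` on `ℂ^{n+1}` with `f_I` homogeneous of degree `m − p`, killed by
contraction with the Euler vector field `Σ x_i ∂_i`. -/
noncomputable def H0model (n p : ℕ) (m : ℤ) :
    Submodule ℂ
      (AlternatingMap ℂ (Fin (n + 1) → ℂ) (MvPolynomial (Fin (n + 1)) ℂ) (Fin p)) where
  carrier :=
    {ω | (∀ (v : Fin p → (Fin (n + 1) → ℂ)) (d : ℕ), (d : ℤ) ≠ m - p →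
            homogeneousComponent d (ω v) = 0) ∧
      ∀ (hp : 0 < p) (w : Fin p → (Fin (n + 1) → ℂ)),
        ∑ i : Fin (n + 1), X i * ω (Function.update w ⟨0, hp⟩ (Pi.single i 1)) = 0}
  add_mem' := by
    rintro a b ⟨ha1, ha2⟩ ⟨hb1, hb2⟩
    refine ⟨fun v d hd => ?_, fun hp w => ?_⟩
    · simp [AlternatingMap.add_apply, map_add, ha1 v d hd, hb1 v d hd]
    · simp only [AlternatingMap.add_apply, mul_add]
      rw [Finset.sum_add_distrib, ha2 hp w, hb2 hp w, add_zero]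
  zero_mem' := by
    refine ⟨fun v d hd => ?_, fun hp w => ?_⟩ <;> simp
  smul_mem' := by
    rintro c a ⟨h1, h2⟩
    refine ⟨fun v d hd => ?_, fun hp w => ?_⟩
    · simp [AlternatingMap.smul_apply, h1 v d hd]
    · simp only [AlternatingMap.smul_apply, mul_smul_comm]
      rw [← Finset.smul_sum, h2 hp w, smul_zero]


open Bott

lemma update_eq_vecCons {n q : ℕ} (w : Fin (q+1) → Vv n) (x : Vv n) :
    Function.update w ⟨0, Nat.succ_pos q⟩ x = Matrix.vecCons x (fun l => w l.succ) := by
  funext j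
  refine Fin.cases ?_ (fun l => ?_) j
  · rw [show (⟨0, Nat.succ_pos q⟩ : Fin (q+1)) = 0 from rfl, Function.update_self,
      Matrix.cons_val_zero]
  · rw [show (⟨0, Nat.succ_pos q⟩ : Fin (q+1)) = 0 from rfl,
      Function.update_of_ne (Fin.succ_ne_zero l), Matrix.cons_val_succ]

lemma euler_iff_gmap {n q : ℕ} (ω : Mp n (q+1)) :
    (∀ (hp : 0 < q+1) (w : Fin (q+1) → Vv n),
        ∑ i : Fin (n+1), X i * ω (Function.update w ⟨0, hp⟩ (Pi.single i 1)) = 0)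
      ↔ gmap ω = 0 := by
  constructor
  · intro hC
    refine AlternatingMap.ext fun u => ?_
    rw [gmap_apply, AlternatingMap.zero_apply]
    have h1 := hC (Nat.succ_pos q) (Matrix.vecCons 0 u)
    have h2 : ∀ i : Fin (n+1),
        Function.update (Matrix.vecCons 0 u) ⟨0, Nat.succ_pos q⟩ (Pi.single i 1)
          = Matrix.vecCons (Pi.single i 1) u := by
      intro i
      rw [update_eq_vecCons]
      have hu : (fun l : Fin q => Matrix.vecCons (0:Vv n) u l.succ) = u := by
        funext l
        rw [Matrix.cons_val_succ]
      rw [hu]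
    have heq : (∑ i : Fin (n+1), (X i : S n) * ω (Matrix.vecCons (Pi.single i 1) u))
        = ∑ i : Fin (n+1), (X i : S n) *
            ω (Function.update (Matrix.vecCons 0 u) ⟨0, Nat.succ_pos q⟩ (Pi.single i 1)) :=
      Finset.sum_congr rfl fun i _ => by rw [h2 i]
    rw [heq]
    exact h1
  · intro hg hp w
    have h2 : ∀ i : Fin (n+1),
        Function.update w ⟨0, hp⟩ (Pi.single i 1)
          = Matrix.vecCons (Pi.single i 1) (fun l => w l.succ) := fun i =>
      update_eq_vecCons w (Pi.single i 1)
    have h3 := congrArg (fun η : Mp n q => η (fun l => w l.succ)) hg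
    simp only [AlternatingMap.zero_apply] at h3
    rw [gmap_apply] at h3
    have heq : (∑ i : Fin (n+1), (X i : S n) *
          ω (Function.update w ⟨0, hp⟩ (Pi.single i 1)))
        = ∑ i : Fin (n+1), (X i : S n) *
            ω (Matrix.vecCons (Pi.single i 1) (fun l => w l.succ)) :=
      Finset.sum_congr rfl fun i _ => by rw [h2 i]
    rw [heq]
    exact h3

lemma comp_oc_eq_zero {n p : ℕ} {f : Cc n} {d : ℕ}
    (h : ∀ I, homogeneousComponent d (f I) = 0) (v : Fin p → Vv n) :
    homogeneousComponent d ((oc n p f) v) = 0 := by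
  show homogeneousComponent d
    ((∑ I' : {I : Finset (Fin (n+1)) // I.card = p}, f I'.1 • deltaS I'.1 I'.2) v) = 0
  rw [sum_apply_alt Finset.univ (fun I' : {I : Finset (Fin (n+1)) // I.card = p} =>
    f I'.1 • deltaS I'.1 I'.2) v, map_sum]
  refine Finset.sum_eq_zero fun I' _ => ?_
  rw [AlternatingMap.smul_apply, deltaS, LinearMap.compAlternatingMap_apply,
    Algebra.linearMap_apply, smul_eq_mul, mul_comm, ← Algebra.smul_def, map_smul,
    h I'.1, smul_zero]

lemma tc_oc {n p : ℕ} {g : Cc n} (hsupp : ∀ I, I.card ≠ p → g I = 0) :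
    tc n p (oc n p g) = g := by
  funext I
  by_cases h : I.card = p
  · rw [tc_apply_pos _ h, oc_btup]
  · rw [tc_apply_neg _ h, (hsupp I h)]

lemma mem_H0_iff {n p : ℕ} {m : ℤ} (ω : Mp n p) :
    ω ∈ H0model n p m ↔ tc n p ω ∈ Ksub n p m := by
  constructor
  · rintro ⟨hhomog, heuler⟩
    refine Submodule.mem_inf.mpr ⟨⟨fun I hI => tc_apply_neg ω hI, fun I d hd => ?_⟩, ?_⟩
    · by_cases h : I.card = p
      · rw [tc_apply_pos ω h]
        exact hhomog _ d hd
      · rw [tc_apply_neg ω h, map_zero]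
    · rw [LinearMap.mem_ker]
      cases p with
      | zero =>
        funext J
        rw [contr_apply]
        have : ∀ i ∈ Jᶜ, sgn J i • ((X i : S n) * tc n 0 ω (insert i J)) = 0 := by
          intro i hi
          have hc : (insert i J).card ≠ 0 := by
            rw [card_insert_of_notMem (mem_compl.mp hi)]
            omega
          rw [tc_apply_neg ω hc, mul_zero, smul_zero]
        rw [Finset.sum_eq_zero this]
        rfl
      | succ q =>
        rw [tc_contr ω, (euler_iff_gmap ω).mp heuler, map_zero]
  · intro hK
    obtain ⟨hA, hker⟩ := Submodule.mem_inf.mp hK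
    refine ⟨fun v d hd => ?_, ?_⟩
    · rw [← oc_tc ω]
      exact comp_oc_eq_zero (fun I => hA.2 I d hd) v
    · intro hp w
      cases p with
      | zero => exact absurd hp (lt_irrefl 0)
      | succ q =>
        have hg : gmap ω = 0 := by
          apply tc_injective n q
          rw [map_zero, ← tc_contr ω]
          exact LinearMap.mem_ker.mp hker
        exact (euler_iff_gmap ω).mpr hg hp w

lemma map_tc_H0 (n p : ℕ) (m : ℤ) :
    Submodule.map (tc n p) (H0model n p m) = Ksub n p m := by
  ext g
  constructor
  · rintro ⟨ω, hω, rfl⟩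
    exact (mem_H0_iff ω).mp hω
  · intro hg
    have hsupp : ∀ I, I.card ≠ p → g I = 0 := (Submodule.mem_inf.mp hg).1.1
    have htc : tc n p (oc n p g) = g := tc_oc hsupp
    exact ⟨oc n p g, (mem_H0_iff (oc n p g)).mpr (by rw [htc]; exact hg), htc⟩

lemma finrank_H0 (n p : ℕ) (m : ℤ) :
    Module.finrank ℂ (H0model n p m) = Module.finrank ℂ (Ksub n p m) := by
  rw [← map_tc_H0 n p m]
  exact LinearEquiv.finrank_eq
    (Submodule.equivMapOfInjective (tc n p) (tc_injective n p) (H0model n p m))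
theorem stmt_4 (n p : ℕ) (m : ℤ) (hpn : p ≤ n) (hpm : (p : ℤ) < m)
    (h : ℕ → ℕ → ℤ → ℕ)
    (h0 : ∀ (p' : ℕ) (m' : ℤ), h 0 p' m' = Module.finrank ℂ (H0model n p' m'))
    (hserre : ∀ (q p' : ℕ) (m' : ℤ), p' ≤ n → q ≤ n → h q p' m' = h (n - q) (n - p') (-m')) :
    Module.finrank ℂ (H0model n p m) =
        (m - 1).toNat.choose p * (m + n - p).toNat.choose m.toNat ∧
      h n (n - p) (-m) =
        (m - 1).toNat.choose p * (m + n - p).toNat.choose m.toNat := by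
  have hm0 : (0:ℤ) ≤ m := by omega
  set M := m.toNat with hMdef
  have hM : (M:ℤ) = m := Int.toNat_of_nonneg hm0
  have hpM : p < M := by omega
  have hfr : Module.finrank ℂ (H0model n p m) =
      (m - 1).toNat.choose p * (m + n - p).toNat.choose m.toNat := by
    rw [finrank_H0 n p m, show m = (M:ℤ) from hM.symm, Bott.count_K n M p hpn hpM]
    have e1 : (((M:ℤ)) - 1).toNat = M - 1 := by omega
    have e2 : (((M:ℤ)) + n - p).toNat = M + n - p := by omega
    have e3 : ((M:ℤ)).toNat = M := by omega
    rw [e1, e2, e3]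
    congr 1
    have h := Nat.choose_symm (show M ≤ M + n - p by omega)
    rw [show M + n - p - M = n - p by omega] at h
    exact h
  refine ⟨hfr, ?_⟩
  rw [hserre n (n-p) (-m) (by omega) (le_refl n), show n - n = 0 by omega,
    show n - (n-p) = p by omega, neg_neg, h0 p m]
  exact hfr
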